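/- arXiv:1705.06315 — 3 statements merged into one kernel-verified Lean document; each statement's English description precedes it below -/
import Mathlib

section
/- For all η ∈ [0,1] and all positive integers k, r_k(η) ≥ min(η, 1−η). -/
noncomputable def rk (k : ℕ) (η : ℝ) : ℝ :=
  ∑ i ∈ Finset.Icc ((k + 1) / 2) k,
    (k.choose i : ℝ) * (η ^ i * (1 - η) ^ (k - i + 1) + (1 - η) ^ i * η ^ (k - i + 1))

theorem stmt_2 : ∀ η ∈ Set.Icc (0 : ℝ) 1, ∀ k : ℕ, 0 < k → min η (1 - η) ≤ rk k η := by
  rintro η ⟨h0, h1⟩ k hk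
  have h1' : 0 ≤ 1 - η := by linarith
  set m := min η (1 - η) with hm
  have hm0 : 0 ≤ m := le_min h0 h1'
  have hmη : m ≤ η := min_le_left _ _
  have hm1 : m ≤ 1 - η := min_le_right _ _
  set s := (k + 1) / 2 with hs
  set t : ℕ → ℝ := fun i => (k.choose i : ℝ) * (η ^ i * (1 - η) ^ (k - i)) with ht
  have htnn : ∀ i, 0 ≤ t i := fun i => by
    simp only [ht]; positivity
  have hbin : ∑ i ∈ Finset.range (k + 1), t i = 1 := by
    calc ∑ i ∈ Finset.range (k + 1), t i = (η + (1 - η)) ^ k := by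
          rw [add_pow]
          exact Finset.sum_congr rfl (fun i _ => by simp only [ht]; ring)
      _ = 1 := by norm_num
  have hB : ∑ i ∈ Finset.Icc s k, (k.choose i : ℝ) * ((1 - η) ^ i * η ^ (k - i))
      = ∑ j ∈ Finset.Icc 0 (k / 2), t j := by
    apply Finset.sum_nbij' (fun i => k - i) (fun j => k - j)
    · intro a ha
      simp only [Finset.mem_Icc] at *
      omega
    · intro b hb
      simp only [Finset.mem_Icc] at *
      omega
    · intro a ha
      simp only [Finset.mem_Icc] at ha
      omega
    · intro b hb
      simp only [Finset.mem_Icc] at hb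
      omega
    · intro a ha
      simp only [Finset.mem_Icc] at ha
      simp only [ht]
      rw [Nat.choose_symm ha.2]
      have : k - (k - a) = a := by omega
      rw [this]
      ring
  have hsub : Finset.Ico (k / 2 + 1) (k + 1) ⊆ Finset.Icc s k := by
    intro x hx
    simp only [Finset.mem_Ico, Finset.mem_Icc] at *
    omega
  have hIcc0 : Finset.Icc 0 (k / 2) = Finset.Ico 0 (k / 2 + 1) := by
    ext x; simp [Nat.lt_succ_iff]
  have hsplit : ∑ i ∈ Finset.Ico 0 (k / 2 + 1), t i + ∑ i ∈ Finset.Ico (k / 2 + 1) (k + 1), t i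
      = ∑ i ∈ Finset.range (k + 1), t i := by
    rw [Finset.range_eq_Ico]
    exact Finset.sum_Ico_consecutive t (by omega) (by omega)
  have hA : ∑ i ∈ Finset.Ico (k / 2 + 1) (k + 1), t i ≤ ∑ i ∈ Finset.Icc s k, t i :=
    Finset.sum_le_sum_of_subset_of_nonneg hsub (fun i _ _ => htnn i)
  have hAB : 1 ≤ (∑ i ∈ Finset.Icc s k, t i)
      + ∑ i ∈ Finset.Icc s k, (k.choose i : ℝ) * ((1 - η) ^ i * η ^ (k - i)) := by
    rw [hB, hIcc0]
    linarith [hsplit, hbin, hA]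
  have key : m * ((∑ i ∈ Finset.Icc s k, t i)
      + ∑ i ∈ Finset.Icc s k, (k.choose i : ℝ) * ((1 - η) ^ i * η ^ (k - i))) ≤ rk k η := by
    rw [rk, mul_add, Finset.mul_sum, Finset.mul_sum, ← Finset.sum_add_distrib]
    apply Finset.sum_le_sum
    intro i hi
    simp only [ht]
    have e1 : (1 - η) ^ (k - i + 1) = (1 - η) ^ (k - i) * (1 - η) := pow_succ _ _
    have e2 : η ^ (k - i + 1) = η ^ (k - i) * η := pow_succ _ _
    rw [e1, e2]
    have c1 : m * (η ^ i * (1 - η) ^ (k - i)) ≤ η ^ i * ((1 - η) ^ (k - i) * (1 - η)) := by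
      have : m * (η ^ i * (1 - η) ^ (k - i)) ≤ (1 - η) * (η ^ i * (1 - η) ^ (k - i)) := by
        apply mul_le_mul_of_nonneg_right hm1 (by positivity)
      nlinarith [this]
    have c2 : m * ((1 - η) ^ i * η ^ (k - i)) ≤ (1 - η) ^ i * (η ^ (k - i) * η) := by
      have : m * ((1 - η) ^ i * η ^ (k - i)) ≤ η * ((1 - η) ^ i * η ^ (k - i)) := by
        apply mul_le_mul_of_nonneg_right hmη (by positivity)
      nlinarith [this]
    have hC : (0:ℝ) ≤ (k.choose i : ℝ) := Nat.cast_nonneg _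
    have hfin := mul_le_mul_of_nonneg_left (add_le_add c1 c2) hC
    nlinarith [hfin]
  calc m = m * 1 := by ring
    _ ≤ m * ((∑ i ∈ Finset.Icc s k, t i)
        + ∑ i ∈ Finset.Icc s k, (k.choose i : ℝ) * ((1 - η) ^ i * η ^ (k - i))) :=
        by exact mul_le_mul_of_nonneg_left hAB hm0
    _ ≤ rk k η := key
end

section
/- For every η ∈ [0,1], r_k(η) → min(η, 1−η) as k → ∞ along odd integers k. -/
open Finset Filter

lemma reflect_sum (η : ℝ) (n : ℕ) :
    ∑ i ∈ Finset.Icc (n+1) (2*n+1), ((2*n+1).choose i : ℝ) * ((1-η)^i * η^(2*n+1-i))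
      = ∑ j ∈ Finset.range (n+1), ((2*n+1).choose j : ℝ) * (η^j * (1-η)^(2*n+1-j)) := by
  refine Finset.sum_nbij' (fun i => 2*n+1-i) (fun j => 2*n+1-j) ?_ ?_ ?_ ?_ ?_
  · intro a ha; simp only [mem_Icc, mem_range] at *; omega
  · intro a ha; simp only [mem_Icc, mem_range] at *; omega
  · intro a ha; simp only [mem_Icc, mem_range] at *; omega
  · intro a ha; simp only [mem_Icc, mem_range] at *; omega
  · intro a ha
    simp only [mem_Icc] at ha
    rw [Nat.choose_symm (show a ≤ 2*n+1 by omega),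
      show 2*n+1-(2*n+1-a) = a by omega]
    ring

lemma rk_eq (η : ℝ) (n : ℕ) :
    rk (2*n+1) η = η + (1 - 2*η) *
      ∑ i ∈ Finset.Icc (n+1) (2*n+1), ((2*n+1).choose i : ℝ) * (η^i * (1-η)^(2*n+1-i)) := by
  have hk : (2*n+1+1)/2 = n+1 := by omega
  set S := ∑ i ∈ Finset.Icc (n+1) (2*n+1), ((2*n+1).choose i : ℝ) * (η^i * (1-η)^(2*n+1-i)) with hS
  set T := ∑ i ∈ Finset.Icc (n+1) (2*n+1), ((2*n+1).choose i : ℝ) * ((1-η)^i * η^(2*n+1-i)) with hT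
  have hfull : ∑ i ∈ Finset.range (2*n+2), ((2*n+1).choose i : ℝ) * (η^i * (1-η)^(2*n+1-i)) = 1 := by
    have h := add_pow η (1-η) (2*n+1)
    simp only [add_sub_cancel, one_pow] at h
    have hre : ∑ i ∈ Finset.range (2*n+1+1), ((2*n+1).choose i : ℝ) * (η^i*(1-η)^(2*n+1-i))
        = ∑ m ∈ Finset.range (2*n+1+1), η^m*(1-η)^(2*n+1-m)*((2*n+1).choose m : ℝ) :=
      Finset.sum_congr rfl fun i _ => by ring
    rw [show (2*n+2) = 2*n+1+1 by omega, hre]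
    exact h.symm
  have hsplit : ∑ j ∈ Finset.range (n+1), ((2*n+1).choose j : ℝ) * (η^j * (1-η)^(2*n+1-j)) + S = 1 := by
    have h2 : (∑ i ∈ Finset.Ico 0 (n+1), ((2*n+1).choose i : ℝ) * (η^i * (1-η)^(2*n+1-i)))
        + ∑ i ∈ Finset.Ico (n+1) (2*n+2), ((2*n+1).choose i : ℝ) * (η^i * (1-η)^(2*n+1-i))
        = ∑ i ∈ Finset.Ico 0 (2*n+2), ((2*n+1).choose i : ℝ) * (η^i * (1-η)^(2*n+1-i)) :=
      Finset.sum_Ico_consecutive _ (by omega) (by omega)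
    rw [← Finset.range_eq_Ico] at h2
    rw [← Finset.range_eq_Ico, hfull] at h2
    rw [hS, show Finset.Icc (n+1) (2*n+1) = Finset.Ico (n+1) (2*n+2) by
      rw [show (2*n+2) = 2*n+1+1 by omega, Finset.Ico_add_one_right_eq_Icc]]
    exact h2
  have hTS : T = 1 - S := by rw [hT, reflect_sum]; linarith
  have hrk : rk (2*n+1) η = (1-η) * S + η * T := by
    rw [hS, hT, Finset.mul_sum, Finset.mul_sum, ← Finset.sum_add_distrib]
    unfold rk
    rw [hk]
    refine Finset.sum_congr rfl fun i hi => ?_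
    simp only [mem_Icc] at hi
    rw [show 2*n+1-i+1 = (2*n+1-i)+1 from rfl, pow_succ, pow_succ]
    ring
  rw [hrk, hTS]; ring

lemma key (η : ℝ) (h0 : 0 ≤ η) (h2 : η ≤ 1/2) :
    Filter.Tendsto (fun n : ℕ => rk (2*n+1) η) Filter.atTop (nhds η) := by
  have hη1 : η ≤ 1 - η := by linarith
  have h1η : 0 ≤ 1 - η := by linarith
  set S : ℕ → ℝ := fun n => ∑ i ∈ Finset.Icc (n+1) (2*n+1), ((2*n+1).choose i : ℝ) * (η^i * (1-η)^(2*n+1-i)) with hSdef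
  have hS0 : ∀ n, 0 ≤ S n := fun n =>
    Finset.sum_nonneg fun i _ => by positivity
  have hSb : ∀ n, S n ≤ 2*η * (4*η*(1-η))^n := by
    intro n
    have step : ∀ i ∈ Finset.Icc (n+1) (2*n+1),
        ((2*n+1).choose i : ℝ) * (η^i * (1-η)^(2*n+1-i))
          ≤ ((2*n+1).choose i : ℝ) * (η^(n+1) * (1-η)^n) := by
      intro i hi
      simp only [mem_Icc] at hi
      have ha : i = (n+1) + (i - (n+1)) := by omega
      have hb : 2*n+1-i = n - (i - (n+1)) := by omega
      set a := i - (n+1) with hadef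
      have han : a ≤ n := by omega
      have key : η^i * (1-η)^(2*n+1-i) ≤ η^(n+1) * (1-η)^n := by
        rw [hb, ha, pow_add]
        have h1 : η ^ a ≤ (1-η)^a := pow_le_pow_left₀ h0 hη1 a
        calc η^(n+1) * η^a * (1-η)^(n-a) ≤ η^(n+1) * ((1-η)^a * (1-η)^(n-a)) := by
              have : η^a * (1-η)^(n-a) ≤ (1-η)^a * (1-η)^(n-a) := by
                apply mul_le_mul_of_nonneg_right h1 (by positivity)
              nlinarith [pow_nonneg h0 (n+1)]
          _ = η^(n+1) * (1-η)^n := by rw [← pow_add]; congr 2; omega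
      exact mul_le_mul_of_nonneg_left key (by positivity)
    calc S n ≤ ∑ i ∈ Finset.Icc (n+1) (2*n+1), ((2*n+1).choose i : ℝ) * (η^(n+1) * (1-η)^n) :=
          Finset.sum_le_sum step
      _ = (∑ i ∈ Finset.Icc (n+1) (2*n+1), ((2*n+1).choose i : ℝ)) * (η^(n+1) * (1-η)^n) := by
          rw [Finset.sum_mul]
      _ ≤ (2^(2*n+1) : ℝ) * (η^(n+1) * (1-η)^n) := by
          apply mul_le_mul_of_nonneg_right _ (by positivity)
          have : ∑ i ∈ Finset.Icc (n+1) (2*n+1), (2*n+1).choose i ≤ 2^(2*n+1) := by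
            rw [← Nat.sum_range_choose (2*n+1)]
            apply Finset.sum_le_sum_of_subset
            intro x hx; simp only [mem_Icc, mem_range] at *; omega
          calc (∑ i ∈ Finset.Icc (n+1) (2*n+1), ((2*n+1).choose i : ℝ))
              = ((∑ i ∈ Finset.Icc (n+1) (2*n+1), (2*n+1).choose i : ℕ) : ℝ) := by push_cast; ring
            _ ≤ ((2^(2*n+1) : ℕ) : ℝ) := by exact_mod_cast this
            _ = (2^(2*n+1) : ℝ) := by push_cast; ring
      _ = 2*η * (4*η*(1-η))^n := by
          rw [mul_pow, mul_pow, pow_succ, pow_add, pow_mul]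
          ring_nf
  have hTendS : Filter.Tendsto (fun n => (1 - 2*η) * S n) Filter.atTop (nhds 0) := by
    rcases eq_or_lt_of_le h2 with heq | hlt
    · have hz : (1:ℝ) - 2*η = 0 := by rw [heq]; norm_num
      simp only [hz, zero_mul]
      exact tendsto_const_nhds
    · have hr : 4*η*(1-η) < 1 := by nlinarith
      have hr0 : 0 ≤ 4*η*(1-η) := by positivity
      have hpow : Filter.Tendsto (fun n : ℕ => 2*η * (4*η*(1-η))^n) Filter.atTop (nhds 0) := by
        have := tendsto_pow_atTop_nhds_zero_of_lt_one hr0 hr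
        simpa using this.const_mul (2*η)
      have hSz : Filter.Tendsto S Filter.atTop (nhds 0) :=
        squeeze_zero hS0 hSb hpow
      simpa using hSz.const_mul (1 - 2*η)
  have : Filter.Tendsto (fun n : ℕ => η + (1 - 2*η) * S n) Filter.atTop (nhds (η + 0)) :=
    tendsto_const_nhds.add hTendS
  simp only [add_zero] at this
  convert this using 2 with n
  exact rk_eq η n

lemma rk_symm (k : ℕ) (η : ℝ) : rk k (1 - η) = rk k η := by
  unfold rk
  refine Finset.sum_congr rfl fun i _ => ?_
  rw [sub_sub_cancel]
  ring

theorem stmt_4 : ∀ η ∈ Set.Icc (0 : ℝ) 1,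
    Filter.Tendsto (fun n : ℕ => rk (2 * n + 1) η) Filter.atTop
      (nhds (min η (1 - η))) := by
  rintro η ⟨h0, h1⟩
  rcases le_or_gt η (1/2) with h | h
  · rw [min_eq_left (by linarith)]
    exact key η h0 h
  · rw [min_eq_right (by linarith)]
    have := key (1-η) (by linarith) (by linarith)
    simpa only [rk_symm] using this
end

section
/- (Bias bound for the relaxed ensemble) Suppose estimators R(N, lᵢ) have bias Σ_{j=2}^{s−1} c_j (lᵢN)^{−j/d} + O(N^{−s/d}) with s ≥ ⌈d/2⌉, and weights w satisfy Σᵢ wᵢ = 1 and |Σᵢ wᵢ lᵢ^{−j/d}| ≤ ε N^{j/d − 1/2} for all 2 ≤ j ≤ ⌈d/2⌉ − 1. Then the bias of Φ(N, w) = Σᵢ wᵢ R(N, lᵢ) satisfies |Bias| ≤ (Σ_{j=2}^{⌈d/2⌉−1} |c_j|) · ε · N^{−1/2} + O(N^{−1/2}), i.e., the ensemble bias is O(N^{−1/2}). -/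
open Finset

theorem stmt_9 (L d s : ℕ) (hd : 2 ≤ d) (hs : (d + 1) / 2 ≤ s)
    (l : Fin L → ℝ) (hl : ∀ i, l i ∈ Set.Ioc (0 : ℝ) 1)
    (c : ℕ → ℝ) (w : Fin L → ℝ) (ε : ℝ) (hε : 0 ≤ ε)
    (hwsum : ∑ i, w i = 1)
    (hwJ : ∀ N : ℝ, 1 ≤ N → ∀ j : ℕ, 2 ≤ j → j ≤ (d + 1) / 2 - 1 →
      |∑ i, w i * (l i) ^ (-(j : ℝ) / d)| ≤ ε * N ^ ((j : ℝ) / d - 1 / 2))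
    (Er : ℝ → ℝ) (C : ℝ)
    (hEr : ∀ N : ℝ, 1 ≤ N → |Er N| ≤ C * N ^ (-(s : ℝ) / d))
    (B : ℝ → ℝ)
    (hB : ∀ N : ℝ, 1 ≤ N →
      B N = ∑ i, w i * (∑ j ∈ Finset.Icc 2 (s - 1), c j * (l i * N) ^ (-(j : ℝ) / d)) + Er N) :
    ∃ C' : ℝ, ∀ N : ℝ, 1 ≤ N →
      |B N| ≤ (∑ j ∈ Finset.Icc 2 ((d + 1) / 2 - 1), |c j|) * ε * N ^ (-(1 : ℝ) / 2)
        + C' * N ^ (-(1 : ℝ) / 2) := by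
  classical
  set K := (d + 1) / 2 with hK
  refine ⟨(∑ j ∈ Finset.Icc 2 (s - 1), |c j| * ∑ i, |w i| * (l i) ^ (-(j : ℝ) / d)) + C, ?_⟩
  intro N hN
  have hN0 : (0 : ℝ) < N := lt_of_lt_of_le one_pos hN
  have hd0 : (0 : ℝ) < d := by exact_mod_cast (by omega : 0 < d)
  have hC0 : 0 ≤ C := by
    have h := hEr 1 le_rfl
    rw [Real.one_rpow, mul_one] at h
    exact le_trans (abs_nonneg _) h
  -- rewrite B N
  have hrw : B N = (∑ j ∈ Finset.Icc 2 (s - 1),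
      c j * ((∑ i, w i * (l i) ^ (-(j : ℝ) / d)) * N ^ (-(j : ℝ) / d))) + Er N := by
    rw [hB N hN]
    congr 1
    simp_rw [Finset.mul_sum]
    rw [Finset.sum_comm]
    refine Finset.sum_congr rfl fun j _ => ?_
    have h1 : ∀ i : Fin L, w i * (c j * (l i * N) ^ (-(j : ℝ) / d))
        = c j * (w i * (l i) ^ (-(j : ℝ) / d)) * N ^ (-(j : ℝ) / d) := fun i => by
      rw [Real.mul_rpow (hl i).1.le hN0.le]; ring
    simp_rw [h1]
    rw [← Finset.sum_mul, ← Finset.mul_sum, mul_assoc]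
  rw [hrw]
  have habs : |(∑ j ∈ Finset.Icc 2 (s - 1),
      c j * ((∑ i, w i * (l i) ^ (-(j : ℝ) / d)) * N ^ (-(j : ℝ) / d))) + Er N|
      ≤ (∑ j ∈ Finset.Icc 2 (s - 1),
        |c j| * |∑ i, w i * (l i) ^ (-(j : ℝ) / d)| * N ^ (-(j : ℝ) / d)) + |Er N| := by
    refine le_trans (abs_add_le _ _) (add_le_add_left ?_ _)
    refine le_trans (Finset.abs_sum_le_sum_abs _ _) (le_of_eq ?_)
    refine Finset.sum_congr rfl fun j _ => ?_
    rw [abs_mul, abs_mul, Real.abs_rpow_of_nonneg hN0.le, abs_of_pos hN0, mul_assoc]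
  refine le_trans habs ?_
  -- split the sum
  rw [← Finset.sum_filter_add_sum_filter_not (Finset.Icc 2 (s - 1)) (fun j => j ≤ K - 1)]
  have hlow : (∑ j ∈ (Finset.Icc 2 (s - 1)).filter (fun j => j ≤ K - 1),
      |c j| * |∑ i, w i * (l i) ^ (-(j : ℝ) / d)| * N ^ (-(j : ℝ) / d))
      ≤ (∑ j ∈ Finset.Icc 2 (K - 1), |c j|) * ε * N ^ (-(1 : ℝ) / 2) := by
    have step1 : ∀ j ∈ (Finset.Icc 2 (s - 1)).filter (fun j => j ≤ K - 1),
        |c j| * |∑ i, w i * (l i) ^ (-(j : ℝ) / d)| * N ^ (-(j : ℝ) / d)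
        ≤ |c j| * (ε * N ^ (-(1 : ℝ) / 2)) := by
      intro j hj
      rw [Finset.mem_filter, Finset.mem_Icc] at hj
      have hS := hwJ N hN j hj.1.1 hj.2
      have heq : N ^ ((j : ℝ) / d - 1 / 2) * N ^ (-(j : ℝ) / d) = N ^ (-(1 : ℝ) / 2) := by
        rw [← Real.rpow_add hN0]; ring_nf
      calc |c j| * |∑ i, w i * (l i) ^ (-(j : ℝ) / d)| * N ^ (-(j : ℝ) / d)
          ≤ |c j| * (ε * N ^ ((j : ℝ) / d - 1 / 2)) * N ^ (-(j : ℝ) / d) := by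
            refine mul_le_mul_of_nonneg_right (mul_le_mul_of_nonneg_left hS (abs_nonneg _))
              (Real.rpow_nonneg hN0.le _)
        _ = |c j| * (ε * N ^ (-(1 : ℝ) / 2)) := by
            rw [mul_assoc, mul_assoc, heq]
    refine le_trans (Finset.sum_le_sum step1) ?_
    have hsub : (Finset.Icc 2 (s - 1)).filter (fun j => j ≤ K - 1) ⊆ Finset.Icc 2 (K - 1) := by
      intro j hj
      rw [Finset.mem_filter, Finset.mem_Icc] at hj
      rw [Finset.mem_Icc]
      exact ⟨hj.1.1, hj.2⟩
    refine le_trans (Finset.sum_le_sum_of_subset_of_nonneg hsub fun j _ _ => by positivity) ?_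
    rw [Finset.sum_mul, Finset.sum_mul]
    exact le_of_eq (Finset.sum_congr rfl fun j _ => by ring)
  have hhigh : (∑ j ∈ (Finset.Icc 2 (s - 1)).filter (fun j => ¬ j ≤ K - 1),
      |c j| * |∑ i, w i * (l i) ^ (-(j : ℝ) / d)| * N ^ (-(j : ℝ) / d))
      ≤ (∑ j ∈ Finset.Icc 2 (s - 1), |c j| * ∑ i, |w i| * (l i) ^ (-(j : ℝ) / d))
        * N ^ (-(1 : ℝ) / 2) := by
    have step1 : ∀ j ∈ (Finset.Icc 2 (s - 1)).filter (fun j => ¬ j ≤ K - 1),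
        |c j| * |∑ i, w i * (l i) ^ (-(j : ℝ) / d)| * N ^ (-(j : ℝ) / d)
        ≤ (|c j| * ∑ i, |w i| * (l i) ^ (-(j : ℝ) / d)) * N ^ (-(1 : ℝ) / 2) := by
      intro j hj
      rw [Finset.mem_filter, Finset.mem_Icc] at hj
      have hjK : K ≤ j := by omega
      have hSb : |∑ i, w i * (l i) ^ (-(j : ℝ) / d)|
          ≤ ∑ i, |w i| * (l i) ^ (-(j : ℝ) / d) := by
        refine le_trans (Finset.abs_sum_le_sum_abs _ _) (le_of_eq ?_)
        refine Finset.sum_congr rfl fun i _ => ?_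
        rw [abs_mul, Real.abs_rpow_of_nonneg (hl i).1.le, abs_of_pos (hl i).1]
      have hexp : -(j : ℝ) / d ≤ -(1 : ℝ) / 2 := by
        have h2j : (d : ℝ) ≤ 2 * j := by exact_mod_cast (by omega : d ≤ 2 * j)
        rw [neg_div, neg_div, neg_le_neg_iff, div_le_div_iff₀ two_pos hd0]
        linarith
      have hNle : N ^ (-(j : ℝ) / d) ≤ N ^ (-(1 : ℝ) / 2) :=
        Real.rpow_le_rpow_of_exponent_le hN hexp
      have hnn : 0 ≤ |c j| * ∑ i, |w i| * (l i) ^ (-(j : ℝ) / d) :=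
        mul_nonneg (abs_nonneg _) (Finset.sum_nonneg fun i _ =>
          mul_nonneg (abs_nonneg _) (Real.rpow_nonneg (hl i).1.le _))
      exact mul_le_mul (mul_le_mul_of_nonneg_left hSb (abs_nonneg _)) hNle
        (Real.rpow_nonneg hN0.le _) hnn
    refine le_trans (Finset.sum_le_sum step1) ?_
    refine le_trans (Finset.sum_le_sum_of_subset_of_nonneg (Finset.filter_subset _ _)
      fun j _ _ => mul_nonneg (mul_nonneg (abs_nonneg _) (Finset.sum_nonneg fun i _ =>
        mul_nonneg (abs_nonneg _) (Real.rpow_nonneg (hl i).1.le _)))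
        (Real.rpow_nonneg hN0.le _)) ?_
    rw [Finset.sum_mul]
  have hEr' : |Er N| ≤ C * N ^ (-(1 : ℝ) / 2) := by
    refine le_trans (hEr N hN) (mul_le_mul_of_nonneg_left ?_ hC0)
    refine Real.rpow_le_rpow_of_exponent_le hN ?_
    have h2s : (d : ℝ) ≤ 2 * s := by exact_mod_cast (by omega : d ≤ 2 * s)
    rw [neg_div, neg_div, neg_le_neg_iff, div_le_div_iff₀ two_pos hd0]
    linarith
  calc _ ≤ ((∑ j ∈ Finset.Icc 2 (K - 1), |c j|) * ε * N ^ (-(1 : ℝ) / 2)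
        + (∑ j ∈ Finset.Icc 2 (s - 1), |c j| * ∑ i, |w i| * (l i) ^ (-(j : ℝ) / d))
          * N ^ (-(1 : ℝ) / 2)) + C * N ^ (-(1 : ℝ) / 2) :=
      add_le_add (add_le_add hlow hhigh) hEr'
    _ = _ := by ring
end
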